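/- Let n > k ≥ 1 and L ≥ 1 be integers. The number of strictly increasing integer sequences 1 ≤ j_1 < j_2 < ⋯ < j_{(L+1)(n−k)} ≤ (L+1)·n satisfying j_{s(n−k)} ≤ s·n for all s = 1, …, L is at most ∑_{i=n−k}^{n} C(i−1, n−k−1) · ∏_{s=1}^{L} C(2n + (s−1)k − i, n−k), where C(a,b) denotes the binomial coefficient. -/
import Mathlib

open Finset

private lemma gap_aux {d : ℕ} {f : Fin d → ℕ} (hf : StrictMono f) :
    ∀ (c : ℕ) (a b : Fin d), b.val = a.val + c → f a + c ≤ f b := by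
  intro c
  induction c with
  | zero =>
    intro a b h
    have hab : a = b := Fin.ext (by omega)
    subst hab; omega
  | succ c ih =>
    intro a b h
    have hb' : a.val + c < d := by have := b.isLt; omega
    have h1 := ih a ⟨a.val + c, hb'⟩ rfl
    have h2 : f ⟨a.val + c, hb'⟩ < f b := hf (by simp only [Fin.lt_def]; omega)
    omega

private lemma gap {d : ℕ} {f : Fin d → ℕ} (hf : StrictMono f) (a b : Fin d)
    (h : a.val ≤ b.val) : f a + (b.val - a.val) ≤ f b :=
  gap_aux hf (b.val - a.val) a b (by omega)

private lemma strictMono_eq_of_image_eq {d : ℕ} {f g : Fin d → ℕ} (hf : StrictMono f)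
    (hg : StrictMono g)
    (h : Finset.image f Finset.univ = Finset.image g Finset.univ) : f = g := by
  have hcard : (Finset.image f Finset.univ).card = d := by
    rw [Finset.card_image_of_injective _ hf.injective]; simp
  have h1 := Finset.orderEmbOfFin_unique hcard
    (fun x => Finset.mem_image_of_mem f (Finset.mem_univ x)) hf
  have h2 := Finset.orderEmbOfFin_unique hcard
    (fun x => h ▸ Finset.mem_image_of_mem g (Finset.mem_univ x)) hg
  exact h1.trans h2.symm

/-- Let n > k ≥ 1 and L ≥ 1. The number of strictly increasing integer
sequences 1 ≤ j_1 < ⋯ < j_{(L+1)(n−k)} ≤ (L+1)·n with j_{s(n−k)} ≤ s·n for s = 1,…,L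
is at most ∑_{i=n−k}^{n} C(i−1, n−k−1) · ∏_{s=1}^{L} C(2n + (s−1)k − i, n−k).
(Sequences are modelled as strictly monotone functions j : Fin ((L+1)(n−k)) → ℕ,
where `j ⟨i-1, _⟩` is the i-th term j_i.) -/
theorem stmt7 (n k L : ℕ) (hk : 1 ≤ k) (hkn : k < n) (hL : 1 ≤ L) :
    Nat.card {j : Fin ((L + 1) * (n - k)) → ℕ //
      StrictMono j ∧ (∀ i, 1 ≤ j i) ∧ (∀ i, j i ≤ (L + 1) * n) ∧
      ∀ s : ℕ, 1 ≤ s → s ≤ L → ∀ h : s * (n - k) - 1 < (L + 1) * (n - k),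
        j ⟨s * (n - k) - 1, h⟩ ≤ s * n}
    ≤ ∑ i ∈ Finset.Icc (n - k) n, Nat.choose (i - 1) (n - k - 1) *
        ∏ s ∈ Finset.Icc 1 L, Nat.choose (2 * n + (s - 1) * k - i) (n - k) := by
  classical
  set m := n - k with hm_def
  have hm : 1 ≤ m := by omega
  set d := (L + 1) * m with hd_def
  have hmd : m ≤ d := Nat.le_mul_of_pos_left m (by omega)
  have hm1d : m - 1 < d := by omega
  set i0 : Fin d := ⟨m - 1, hm1d⟩ with hi0_def
  -- the blocks of indices
  set I0 : Finset (Fin d) := univ.filter (fun t => t.val < m - 1) with hI0_def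
  set Iset : ℕ → Finset (Fin d) :=
    fun s => univ.filter (fun t => s * m ≤ t.val ∧ t.val < (s + 1) * m) with hIset_def
  -- the target finset
  set A : Finset ((_ : ℕ) × (Finset ℕ × (∀ s ∈ Icc 1 L, Finset ℕ))) :=
    (Icc m n).sigma (fun i =>
      ((Icc 1 (i - 1)).powersetCard (m - 1)) ×ˢ
      ((Icc 1 L).pi (fun s => (Icc (i + (s - 1) * m + 1) ((s + 1) * n)).powersetCard m)))
    with hA_def
  -- cardinalities of index blocks
  have hI0card : I0.card = m - 1 := by
    have h' : I0 = (Ico 0 (m - 1)).attachFin (fun x hx => by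
        simp only [mem_Ico] at hx; omega) := by
      ext t
      simp [hI0_def, Finset.mem_attachFin, mem_Ico]
    rw [h', Finset.card_attachFin, Nat.card_Ico]
    omega
  have hIcard : ∀ s, 1 ≤ s → s ≤ L → (Iset s).card = m := by
    intro s h1 h2
    have hbd : ∀ x ∈ Ico (s * m) ((s + 1) * m), x < d := by
      intro x hx
      simp only [mem_Ico] at hx
      have h3 : (s + 1) * m ≤ (L + 1) * m := Nat.mul_le_mul (by omega) le_rfl
      omega
    have h' : Iset s = (Ico (s * m) ((s + 1) * m)).attachFin hbd := by
      ext t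
      simp [hIset_def, Finset.mem_attachFin, mem_Ico]
    rw [h', Finset.card_attachFin, Nat.card_Ico]
    have h4 : (s + 1) * m = s * m + m := by ring
    omega
  -- the map
  set Φ : (Fin d → ℕ) → ((_ : ℕ) × (Finset ℕ × (∀ s ∈ Icc 1 L, Finset ℕ))) :=
    fun j => ⟨j i0, (Finset.image j I0, fun s _ => Finset.image j (Iset s))⟩ with hΦ_def
  have key : Nat.card {j : Fin d → ℕ //
      StrictMono j ∧ (∀ i, 1 ≤ j i) ∧ (∀ i, j i ≤ (L + 1) * n) ∧
      ∀ s : ℕ, 1 ≤ s → s ≤ L → ∀ h : s * m - 1 < d, j ⟨s * m - 1, h⟩ ≤ s * n} ≤ A.card := by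
    rw [← Nat.card_eq_finsetCard A]
    have hmem : ∀ (x : {j : Fin d → ℕ //
        StrictMono j ∧ (∀ i, 1 ≤ j i) ∧ (∀ i, j i ≤ (L + 1) * n) ∧
        ∀ s : ℕ, 1 ≤ s → s ≤ L → ∀ h : s * m - 1 < d, j ⟨s * m - 1, h⟩ ≤ s * n}),
        Φ x.1 ∈ A := by
      rintro ⟨j, hmono, h1, hup, hblock⟩
      obtain ⟨hi_low, hi_high⟩ : m ≤ j i0 ∧ j i0 ≤ n := by
        constructor
        · have hg := gap hmono ⟨0, by omega⟩ i0 (by simp [hi0_def])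
          have h0 := h1 ⟨0, by omega⟩
          simp only [hi0_def] at hg ⊢
          omega
        · have hb := hblock 1 le_rfl hL (by omega)
          have he : (⟨1 * m - 1, by omega⟩ : Fin d) = i0 := Fin.ext (by simp [hi0_def])
          rw [he] at hb
          omega
      simp only [hΦ_def, hA_def, Finset.mem_sigma, Finset.mem_product, Finset.mem_pi,
        Finset.mem_powersetCard, mem_Icc]
      refine ⟨⟨hi_low, hi_high⟩, ⟨⟨?_, ?_⟩, ?_⟩⟩
      · -- image j I0 ⊆ Icc 1 (j i0 - 1)
        intro x hx
        simp only [Finset.mem_image, hI0_def, Finset.mem_filter] at hx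
        obtain ⟨t, ⟨-, ht⟩, rfl⟩ := hx
        have hlt : j t < j i0 := hmono (Fin.lt_def.mpr ht)
        have := h1 t
        simp only [mem_Icc]
        omega
      · rw [Finset.card_image_of_injective _ hmono.injective, hI0card]
      · -- blocks
        intro s hs
        obtain ⟨hs1, hsL⟩ := hs
        constructor
        · intro x hx
          simp only [Finset.mem_image, hIset_def, Finset.mem_filter] at hx
          obtain ⟨t, ⟨-, htl, htu⟩, rfl⟩ := hx
          obtain ⟨s', rfl⟩ : ∃ s', s = s' + 1 := ⟨s - 1, by omega⟩
          simp only [mem_Icc, Nat.add_sub_cancel]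
          constructor
          · -- lower bound
            have hv : (i0 : Fin d).val = m - 1 := rfl
            have e1 : (s' + 1) * m = s' * m + m := by ring
            have hg := gap hmono i0 t (by rw [hv]; omega)
            rw [hv] at hg
            omega
          · -- upper bound
            have hidx : (s' + 2) * m - 1 < d := by
              have h3 : (s' + 2) * m ≤ (L + 1) * m := Nat.mul_le_mul (by omega) le_rfl
              omega
            have hle : j t ≤ j ⟨(s' + 2) * m - 1, hidx⟩ := by
              apply hmono.monotone
              simp only [Fin.le_def]
              have e2 : (s' + 1 + 1) * m = (s' + 2) * m := by ring
              omega
            rcases eq_or_lt_of_le hsL with hEq | hlt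
            · -- s = L : use the global upper bound
              have hub := hup ⟨(s' + 2) * m - 1, hidx⟩
              have e : (s' + 1 + 1) * n = (L + 1) * n := by rw [hEq]
              omega
            · -- s < L : use the block condition at s+1
              have hb := hblock (s' + 2) (by omega) (by omega) hidx
              have e : (s' + 1 + 1) * n = (s' + 2) * n := by ring
              omega
        · rw [Finset.card_image_of_injective _ hmono.injective, hIcard s hs1 hsL]
    apply Nat.card_le_card_of_injective
      (f := fun x => (⟨Φ x.1, hmem x⟩ : {y // y ∈ A}))
    rintro ⟨j, hj⟩ ⟨j', hj'⟩ hEq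
    have hΦeq : Φ j = Φ j' := congrArg Subtype.val hEq
    have hival : j i0 = j' i0 := congrArg (fun x => x.1) hΦeq
    have hI0eq : Finset.image j I0 = Finset.image j' I0 :=
      congrArg (fun x => x.2.1) hΦeq
    have hpieq : (fun s (_ : s ∈ Icc 1 L) => Finset.image j (Iset s)) =
        (fun s (_ : s ∈ Icc 1 L) => Finset.image j' (Iset s)) :=
      congrArg (fun x => x.2.2) hΦeq
    have hblocks : ∀ s, 1 ≤ s → s ≤ L →
        Finset.image j (Iset s) = Finset.image j' (Iset s) := by
      intro s hs1 hs2
      exact congrFun (congrFun hpieq s) (mem_Icc.mpr ⟨hs1, hs2⟩)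
    have hcover : (univ : Finset (Fin d)) = (I0 ∪ {i0}) ∪ (Icc 1 L).biUnion Iset := by
      ext t
      simp only [mem_univ, true_iff, mem_union, mem_singleton, mem_biUnion, hI0_def, hIset_def,
        mem_filter, mem_Icc, true_and]
      by_cases hcase : t.val < m
      · left
        rcases Nat.lt_or_ge t.val (m - 1) with h | h
        · exact Or.inl h
        · exact Or.inr (Fin.ext (by simp only [hi0_def]; omega))
      · right
        push_neg at hcase
        have hmpos : 0 < m := hm
        refine ⟨t.val / m, ⟨(Nat.one_le_div_iff hmpos).mpr hcase, ?_⟩,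
          Nat.div_mul_le_self _ _, (Nat.div_lt_iff_lt_mul hmpos).mp (Nat.lt_succ_self _)⟩
        have hlt : t.val < (L + 1) * m := by have := t.isLt; omega
        have := (Nat.div_lt_iff_lt_mul hmpos).mpr (by
          calc t.val < (L + 1) * m := hlt
          _ = (L + 1) * m := rfl)
        omega
    have himg : Finset.image j univ = Finset.image j' univ := by
      rw [hcover]
      simp only [Finset.image_union, Finset.biUnion_image, Finset.image_singleton]
      rw [hI0eq, hival]
      congr 1
      apply Finset.biUnion_congr rfl
      intro s hs
      simp only [mem_Icc] at hs
      exact hblocks s hs.1 hs.2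
    exact Subtype.ext (strictMono_eq_of_image_eq hj.1 hj'.1 himg)
  refine key.trans (le_of_eq ?_)
  clear key
  rw [hA_def, Finset.card_sigma]
  apply Finset.sum_congr rfl
  intro i hi
  simp only [mem_Icc] at hi
  rw [Finset.card_product, Finset.card_pi, Finset.card_powersetCard, Nat.card_Icc,
    Nat.add_sub_cancel]
  apply congrArg
  apply Finset.prod_congr rfl
  intro s hs
  simp only [mem_Icc] at hs
  have harg : (s + 1) * n + 1 - (i + (s - 1) * m + 1) = 2 * n + (s - 1) * k - i := by
    obtain ⟨s', rfl⟩ : ∃ s', s = s' + 1 := ⟨s - 1, by omega⟩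
    simp only [Nat.add_sub_cancel]
    have e1 : (s' + 1 + 1) * n = s' * n + 2 * n := by ring
    have e2 : s' * m + s' * k = s' * n := by
      have e : m + k = n := by omega
      calc s' * m + s' * k = s' * (m + k) := by ring
      _ = s' * n := by rw [e]
    have e3 : s' * m ≤ s' * n := Nat.mul_le_mul le_rfl (by omega)
    omega
  rw [Finset.card_powersetCard, Nat.card_Icc, harg]
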